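/- Let r₁, λ, ψ, u, c > 0. Let ξ_L := (−1 + √(1+8r₁/ψ²))/2, v_L := u + c − r₁c/(ξ_L ψ²), κ_L := r₁c²/(2ψ²), ξ_R := (−1 − √(1+8(r₁+λ)/ψ²))/2, and v_R := r₁(u+c)/(r₁+λ) − r₁c/(ξ_R ψ²). Define, for x ∈ [v_R, v_L], a₋*(x) := 1 − [(√(2r₁)/ψ)·φ((x − u)/√κ_L)] / [(√(2r₁)/ψ)·φ((v_L − u)/√κ_L) + Φ((v_L − u)/√κ_L) − Φ((x − u)/√κ_L)]. If v_R < v_L, then the denominator in this definition is strictly positive for every x ∈ [v_R, v_L], a₋* is strictly decreasing on [v_R, v_L], a₋*(v_L) = 0, and 0 < a₋*(v_R) < 1. -/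

import Mathlib

/-- The standard normal density φ(x) = exp(−x²/2)/√(2π). -/
noncomputable def normPdf (x : ℝ) : ℝ := Real.exp (-(x ^ 2) / 2) / Real.sqrt (2 * Real.pi)

/-- The standard normal CDF Φ(x) = ∫_{−∞}^{x} φ(t) dt. -/
noncomputable def normCdf (x : ℝ) : ℝ := ∫ t in Set.Iic x, normPdf t

open MeasureTheory

lemma normPdf_pos (x : ℝ) : 0 < normPdf x :=
  div_pos (Real.exp_pos _) (Real.sqrt_pos.mpr (by positivity))

lemma continuous_normPdf : Continuous normPdf :=
  (Real.continuous_exp.comp (by continuity)).div_const _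

lemma integrable_normPdf : Integrable normPdf := by
  have h : normPdf = fun x => Real.exp (-(1/2 : ℝ) * x ^ 2) / Real.sqrt (2 * Real.pi) := by
    funext x; simp only [normPdf]; ring_nf
  rw [h]
  exact (integrable_exp_neg_mul_sq (by norm_num)).div_const _

lemma hasDerivAt_normPdf (x : ℝ) : HasDerivAt normPdf (-x * normPdf x) x := by
  have h1 : HasDerivAt (fun y : ℝ => -(y ^ 2) / 2) (-x) x := by
    have := ((hasDerivAt_pow 2 x).neg.div_const 2)
    refine this.congr_deriv ?_; push_cast; ring
  have h2 := (h1.exp).div_const (Real.sqrt (2 * Real.pi))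
  refine h2.congr_deriv ?_
  simp [normPdf]; ring

lemma hasDerivAt_normCdf (x : ℝ) : HasDerivAt normCdf (normPdf x) x := by
  have hint : ∀ y : ℝ, normCdf y = normCdf 0 + ∫ t in (0:ℝ)..y, normPdf t := by
    intro y
    have := intervalIntegral.integral_Iic_sub_Iic
      (integrable_normPdf.integrableOn (s := Set.Iic (0:ℝ)))
      (integrable_normPdf.integrableOn (s := Set.Iic y))
    simp only [normCdf]; linarith
  have hF : HasDerivAt (fun y => ∫ t in (0:ℝ)..y, normPdf t) (normPdf x) x :=
    intervalIntegral.integral_hasDerivAt_right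
      (continuous_normPdf.intervalIntegrable _ _)
      (continuous_normPdf.stronglyMeasurableAtFilter _ _)
      continuous_normPdf.continuousAt
  have : HasDerivAt (fun y => normCdf 0 + ∫ t in (0:ℝ)..y, normPdf t) (normPdf x) x :=
    hF.const_add _
  exact this.congr_of_eventuallyEq (Filter.Eventually.of_forall hint)

lemma normCdf_mono : Monotone normCdf := by
  intro a b hab
  apply setIntegral_mono_set integrable_normPdf.integrableOn
  · filter_upwards with x using (normPdf_pos x).le
  · exact HasSubset.Subset.eventuallyLE (Set.Iic_subset_Iic.mpr hab)

/-- Properties of the function a₋* on [v_R, v_L]: the denominator is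
strictly positive, a₋* is strictly decreasing, a₋*(v_L) = 0, and 0 < a₋*(v_R) < 1. -/
theorem aminus_properties (r₁ lam ψ u c ξL vL κL ξR vR : ℝ)
    (hr : 0 < r₁) (hlam : 0 < lam) (hψ : 0 < ψ) (hu : 0 < u) (hc : 0 < c)
    (hξL : ξL = (-1 + Real.sqrt (1 + 8 * r₁ / ψ ^ 2)) / 2)
    (hvL : vL = u + c - r₁ * c / (ξL * ψ ^ 2))
    (hκL : κL = r₁ * c ^ 2 / (2 * ψ ^ 2))
    (hξR : ξR = (-1 - Real.sqrt (1 + 8 * (r₁ + lam) / ψ ^ 2)) / 2)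
    (hvR : vR = r₁ * (u + c) / (r₁ + lam) - r₁ * c / (ξR * ψ ^ 2))
    (aminus : ℝ → ℝ)
    (haminus : ∀ x, aminus x = 1 -
      ((Real.sqrt (2 * r₁) / ψ) * normPdf ((x - u) / Real.sqrt κL)) /
        ((Real.sqrt (2 * r₁) / ψ) * normPdf ((vL - u) / Real.sqrt κL)
          + normCdf ((vL - u) / Real.sqrt κL)
          - normCdf ((x - u) / Real.sqrt κL)))
    (hvRL : vR < vL) :
    (∀ x ∈ Set.Icc vR vL,
      0 < (Real.sqrt (2 * r₁) / ψ) * normPdf ((vL - u) / Real.sqrt κL)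
          + normCdf ((vL - u) / Real.sqrt κL)
          - normCdf ((x - u) / Real.sqrt κL)) ∧
    StrictAntiOn aminus (Set.Icc vR vL) ∧
    aminus vL = 0 ∧ 0 < aminus vR ∧ aminus vR < 1 := by
  have hκpos : 0 < κL := by rw [hκL]; positivity
  set s := Real.sqrt κL with hs_def
  have hs : 0 < s := Real.sqrt_pos.mpr hκpos
  set A := Real.sqrt (2 * r₁) / ψ with hA_def
  have hA : 0 < A := by positivity
  set tL := (vL - u) / s with htL_def
  set K := A * normPdf tL + normCdf tL with hK_def
  -- ξL facts
  have hSsq : Real.sqrt (1 + 8 * r₁ / ψ ^ 2) ^ 2 = 1 + 8 * r₁ / ψ ^ 2 :=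
    Real.sq_sqrt (by positivity)
  have hS1 : 1 < Real.sqrt (1 + 8 * r₁ / ψ ^ 2) := by
    nlinarith [Real.sqrt_nonneg (1 + 8 * r₁ / ψ ^ 2), div_pos (by positivity : (0:ℝ) < 8 * r₁) (by positivity : (0:ℝ) < ψ ^ 2)]
  have hξpos : 0 < ξL := by rw [hξL]; linarith
  have hψ2 : (ψ:ℝ) ^ 2 ≠ 0 := by positivity
  have h8 : 8 * r₁ / ψ ^ 2 * ψ ^ 2 = 8 * r₁ := div_mul_cancel₀ _ hψ2
  have hξsq : (ξL ^ 2 + ξL) * ψ ^ 2 = 2 * r₁ := by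
    rw [hξL]
    linear_combination (ψ ^ 2 / 4) * hSsq + (1 / 4) * h8
  -- sqrt κL value
  have hsA : A * c = 2 * s := by
    have h2 : Real.sqrt (2 * r₁) ^ 2 = 2 * r₁ := Real.sq_sqrt (by positivity)
    have hsval : s = Real.sqrt (2 * r₁) * c / (2 * ψ) := by
      rw [hs_def, hκL, show r₁ * c ^ 2 / (2 * ψ ^ 2) = (2 * r₁) * (c / (2 * ψ)) ^ 2 from by
        field_simp]
      rw [Real.sqrt_mul (by positivity) ((c / (2 * ψ)) ^ 2),
        Real.sqrt_sq (by positivity)]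
      ring
    rw [hA_def, hsval]; field_simp
  have hvLu : vL - u = c * (1 - ξL) / 2 := by
    have h1 : r₁ * c / (ξL * ψ ^ 2) = c * (1 + ξL) / 2 := by
      rw [div_eq_iff (by positivity : ξL * ψ ^ 2 ≠ 0)]
      linear_combination (-(c / 2)) * hξsq
    rw [hvL, h1]; ring
  have htLA : tL * A = 1 - ξL := by
    rw [htL_def, hvLu]
    rw [show c * (1 - ξL) / 2 / s * A = (1 - ξL) * (A * c) / (2 * s) from by ring, hsA]
    rw [mul_div_assoc, div_self (by positivity : (2:ℝ) * s ≠ 0), mul_one]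
  -- monotonicity of t ↦ (t-u)/s and Cdf bound
  have hKgt : normCdf tL < K := by
    have := mul_pos hA (normPdf_pos tL)
    rw [hK_def]; linarith
  have hKx : ∀ x ≤ vL, normCdf ((x - u) / s) < K := by
    intro x hx
    have h1 : (x - u) / s ≤ tL := by rw [htL_def]; gcongr
    exact lt_of_le_of_lt (normCdf_mono h1) hKgt
  have hDpos : ∀ x ≤ vL, 0 < K - normCdf ((x - u) / s) := fun x hx => by
    have := hKx x hx; linarith
  -- h positivity
  have hhpos : ∀ T ≤ tL, 0 < normPdf T - T * (K - normCdf T) := by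
    set h : ℝ → ℝ := fun T => normPdf T - T * (K - normCdf T) with hh_def
    have hder : ∀ T : ℝ, HasDerivAt h (-(K - normCdf T)) T := by
      intro T
      have h2 := (hasDerivAt_id T).mul ((hasDerivAt_normCdf T).const_sub K)
      have h3 := (hasDerivAt_normPdf T).sub h2
      refine h3.congr_deriv ?_; simp
    have hanti : StrictAntiOn h (Set.Iic tL) := by
      apply strictAntiOn_of_deriv_neg (convex_Iic tL)
        (fun T _ => (hder T).continuousAt.continuousWithinAt)
      intro T hT
      rw [interior_Iic] at hT
      rw [(hder T).deriv]
      have : normCdf T ≤ normCdf tL := normCdf_mono hT.le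
      linarith
    have hend : 0 < h tL := by
      have : h tL = normPdf tL * ξL := by
        rw [hh_def]; simp only [hK_def]
        have : tL * (A * normPdf tL + normCdf tL - normCdf tL) = (tL * A) * normPdf tL := by ring
        rw [show normPdf tL - tL * (A * normPdf tL + normCdf tL - normCdf tL)
            = normPdf tL - (tL * A) * normPdf tL from by ring, htLA]
        ring
      rw [this]; exact mul_pos (normPdf_pos tL) hξpos
    intro T hT
    rcases eq_or_lt_of_le hT with rfl | hT'
    · exact hend
    · exact lt_trans hend (hanti (le_of_lt hT') (le_refl tL) hT')
  -- rewrite aminus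
  have hfun : ∀ x, aminus x = 1 - A * normPdf ((x - u) / s) / (K - normCdf ((x - u) / s)) := by
    intro x; rw [haminus x]
  -- derivative of aminus
  have haffine : ∀ x : ℝ, HasDerivAt (fun y : ℝ => (y - u) / s) (1 / s) x := fun x =>
    ((hasDerivAt_id x).sub_const u).div_const s
  have hda : ∀ x ≤ vL, HasDerivAt aminus
      (-(((A * (-(((x - u) / s)) * normPdf ((x - u) / s)) * (1 / s)) * (K - normCdf ((x - u) / s))
        - (A * normPdf ((x - u) / s)) * (-(normPdf ((x - u) / s) * (1 / s))))
        / (K - normCdf ((x - u) / s)) ^ 2)) x := by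
    intro x hx
    have hN : HasDerivAt (fun y : ℝ => A * normPdf ((y - u) / s))
        (A * ((-(((x - u) / s)) * normPdf ((x - u) / s)) * (1 / s))) x :=
      by have := (((hasDerivAt_normPdf ((x - u) / s)).comp x (haffine x)).const_mul A); exact this
    have hΦ : HasDerivAt (fun y : ℝ => K - normCdf ((y - u) / s))
        (-(normPdf ((x - u) / s) * (1 / s))) x :=
      by have := (((hasDerivAt_normCdf ((x - u) / s)).comp x (haffine x))).const_sub K; exact this
    have hne : K - normCdf ((x - u) / s) ≠ 0 := ne_of_gt (hDpos x hx)
    have hdiv := (hN.div hΦ hne).const_sub 1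
    have : aminus = fun x => 1 - A * normPdf ((x - u) / s) / (K - normCdf ((x - u) / s)) :=
      funext hfun
    rw [this]
    refine hdiv.congr_deriv ?_; ring
  -- derivative is negative on the interior
  have hderiv_neg : ∀ x ∈ Set.Ioo vR vL, deriv aminus x < 0 := by
    intro x hx
    have hxle : x ≤ vL := hx.2.le
    rw [(hda x hxle).deriv]
    set T := (x - u) / s with hT_def
    have hTtl : T ≤ tL := by rw [hT_def, htL_def]; gcongr
    have hP := normPdf_pos T
    have hD := hDpos x hxle
    have hh := hhpos T hTtl
    have heq : -(((A * (-T * normPdf T) * (1 / s)) * (K - normCdf T)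
        - (A * normPdf T) * (-(normPdf T * (1 / s)))) / (K - normCdf T) ^ 2)
        = -((A * normPdf T * (normPdf T - T * (K - normCdf T)) / s) / (K - normCdf T) ^ 2) := by
      ring
    rw [heq]
    have : 0 < (A * normPdf T * (normPdf T - T * (K - normCdf T)) / s) / (K - normCdf T) ^ 2 :=
      div_pos (div_pos (mul_pos (mul_pos hA hP) hh) hs) (pow_pos hD 2)
    linarith
  have hcont : ContinuousOn aminus (Set.Icc vR vL) := fun x hx =>
    (hda x hx.2).continuousAt.continuousWithinAt
  have hanti : StrictAntiOn aminus (Set.Icc vR vL) := by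
    apply strictAntiOn_of_deriv_neg (convex_Icc vR vL) hcont
    intro x hx
    rw [interior_Icc] at hx
    exact hderiv_neg x hx
  have hvLval : aminus vL = 0 := by
    rw [hfun vL]
    have h1 : K - normCdf ((vL - u) / s) = A * normPdf tL := by
      rw [hK_def, htL_def]; ring
    rw [h1, htL_def]
    rw [div_self (ne_of_gt (mul_pos hA (normPdf_pos _)))]
    ring
  have hmemR : vR ∈ Set.Icc vR vL := ⟨le_refl _, hvRL.le⟩
  have hmemL : vL ∈ Set.Icc vR vL := ⟨hvRL.le, le_refl _⟩
  have hpos : 0 < aminus vR := by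
    have := hanti hmemR hmemL hvRL
    rw [hvLval] at this; linarith
  have hlt1 : aminus vR < 1 := by
    rw [hfun vR]
    have : 0 < A * normPdf ((vR - u) / s) / (K - normCdf ((vR - u) / s)) :=
      div_pos (mul_pos hA (normPdf_pos _)) (hDpos vR hvRL.le)
    linarith
  refine ⟨fun x hx => ?_, hanti, hvLval, hpos, hlt1⟩
  have := hDpos x hx.2
  rw [hK_def] at this
  linarith
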